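/- Convergence under monotone descent (convex case): suppose each f_k : ℝ^d → ℝ is convex, L-smooth, and bounded below. Let the iterates be w_{t+1} = w_t - η d_t with constant step size η ≤ 1/L, where each d_t = J(w_t) λ_t for some λ_t in the probability simplex, and the vector of function values f(w_t) is componentwise monotonically decreasing in t. Then with λ̄ = (1/T) ∑_{t=0}^{T-1} λ_t, for every w ∈ ℝ^d: ⟨λ̄, f(w_T)⟩ - ⟨λ̄, f(w)⟩ ≤ ‖w_0 - w‖² / (2 η T). -/

import Mathlib

open scoped RealInnerProductSpace
open Finset Set

variable {E : Type*} [NormedAddCommGroup E] [InnerProductSpace ℝ E] [CompleteSpace E]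

lemma curve_hasDerivAt {f : E → ℝ} {g : E → E} (hg : ∀ x, HasGradientAt f (g x) x)
    (x v : E) (s : ℝ) :
    HasDerivAt (fun s : ℝ => f (x + s • v)) ⟪g (x + s • v), v⟫ s := by
  have hc : HasDerivAt (fun s : ℝ => x + s • v) v s := by
    simpa using ((hasDerivAt_id s).smul_const v).const_add x
  have := ((hg (x + s • v)).hasFDerivAt).comp_hasDerivAt s hc
  simp [InnerProductSpace.toDual_apply_apply] at this
  exact this

lemma convex_grad_ineq {f : E → ℝ} {g : E → E} (hconv : ConvexOn ℝ Set.univ f)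
    (hg : ∀ x, HasGradientAt f (g x) x) (x z : E) :
    f x + ⟪g x, z - x⟫ ≤ f z := by
  set φ : ℝ → ℝ := fun s => f (x + s • (z - x)) with hφ
  have hφconv : ConvexOn ℝ Set.univ φ := by
    have h := hconv.comp_affineMap (AffineMap.lineMap x z)
    have hfun : (f ∘ ⇑(AffineMap.lineMap x z)) = φ := by
      funext s
      simp only [hφ, Function.comp_apply, AffineMap.lineMap_apply_module]
      congr 1
      module
    rw [hfun] at h
    simpa using h
  have hd := curve_hasDerivAt hg x (z - x) 0
  simp only [zero_smul, add_zero] at hd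
  have := hφconv.le_slope_of_hasDerivAt (Set.mem_univ (0:ℝ)) (Set.mem_univ (1:ℝ))
    (by norm_num) hd
  rw [slope_def_field] at this
  simp only [hφ, one_smul, zero_smul, add_zero, add_sub_cancel] at this
  have h01 : ((1:ℝ) - 0) = 1 := by norm_num
  nlinarith [this]

lemma descent_lemma {f : E → ℝ} {g : E → E} {L : ℝ} (hL : 0 ≤ L)
    (hg : ∀ x, HasGradientAt f (g x) x) (hlip : LipschitzWith L.toNNReal g) (x y : E) :
    f y ≤ f x + ⟪g x, y - x⟫ + L / 2 * ‖y - x‖ ^ 2 := by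
  set v := y - x with hv
  set A := ⟪g x, v⟫ with hA
  set B := ‖v‖ ^ 2 with hB
  set ψ : ℝ → ℝ := fun s => f (x + s • v) - s * A - L / 2 * s ^ 2 * B with hψdef
  have hψd : ∀ s : ℝ, HasDerivAt ψ (⟪g (x + s • v), v⟫ - A - L * s * B) s := by
    intro s
    have h1 := curve_hasDerivAt hg x v s
    have h2 : HasDerivAt (fun s : ℝ => s * A) A s := by
      simpa using (hasDerivAt_id s).mul_const A
    have h3 : HasDerivAt (fun s : ℝ => L / 2 * s ^ 2 * B) (L * s * B) s := by
      have := ((hasDerivAt_pow 2 s).const_mul (L / 2)).mul_const B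
      refine this.congr_deriv ?_
      ring
    exact (h1.sub h2).sub h3
  have hanti : AntitoneOn ψ (Icc (0:ℝ) 1) := by
    apply antitoneOn_of_deriv_nonpos (convex_Icc 0 1)
    · exact fun s _ => ((hψd s).differentiableAt).continuousAt.continuousWithinAt
    · intro s _
      exact ((hψd s).differentiableAt).differentiableWithinAt
    · intro s hs
      rw [interior_Icc] at hs
      rw [(hψd s).deriv]
      have hdist := hlip.dist_le_mul (x + s • v) x
      rw [Real.coe_toNNReal L hL, dist_eq_norm, dist_eq_norm] at hdist
      have hns : ‖x + s • v - x‖ = s * ‖v‖ := by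
        simp [norm_smul, abs_of_pos hs.1]
      rw [hns] at hdist
      have hinner : ⟪g (x + s • v), v⟫ - A = ⟪g (x + s • v) - g x, v⟫ := by
        rw [inner_sub_left]
      have hcs : ⟪g (x + s • v) - g x, v⟫ ≤ ‖g (x + s • v) - g x‖ * ‖v‖ :=
        real_inner_le_norm _ _
      have : ⟪g (x + s • v), v⟫ - A ≤ L * s * B := by
        rw [hinner, hB]
        calc ⟪g (x + s • v) - g x, v⟫ ≤ ‖g (x + s • v) - g x‖ * ‖v‖ := hcs
          _ ≤ L * (s * ‖v‖) * ‖v‖ := by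
              apply mul_le_mul_of_nonneg_right _ (norm_nonneg v)
              exact hdist.trans_eq rfl
          _ = L * s * ‖v‖ ^ 2 := by ring
      linarith
  have := hanti (Set.left_mem_Icc.2 (by norm_num)) (Set.right_mem_Icc.2 (by norm_num))
    (by norm_num)
  simp only [hψdef, one_smul, zero_smul, add_zero] at this
  have hxy : x + v = y := by rw [hv]; abel
  rw [hxy] at this
  nlinarith [this]

/-- convergence under monotone descent, convex case. -/
theorem stmt7 {n m : ℕ} (f : Fin m → EuclideanSpace ℝ (Fin n) → ℝ)
    (gradf : Fin m → EuclideanSpace ℝ (Fin n) → EuclideanSpace ℝ (Fin n))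
    (L : ℝ) (hL : 0 < L)
    (hgrad : ∀ k x, HasGradientAt (f k) (gradf k x) x)
    (hlip : ∀ k, LipschitzWith L.toNNReal (gradf k))
    (hconv : ∀ k, ConvexOn ℝ Set.univ (f k))
    (hbdd : ∀ k, BddBelow (Set.range (f k)))
    (η : ℝ) (hη0 : 0 < η) (hη1 : η ≤ 1 / L)
    (w d : ℕ → EuclideanSpace ℝ (Fin n)) (lam : ℕ → Fin m → ℝ)
    (hlam0 : ∀ t k, 0 ≤ lam t k) (hlam1 : ∀ t, ∑ k, lam t k = 1)
    (hd : ∀ t, d t = ∑ k, lam t k • gradf k (w t))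
    (hstep : ∀ t, w (t + 1) = w t - η • d t)
    (hmono : ∀ t k, f k (w (t + 1)) ≤ f k (w t))
    (T : ℕ) (hT : 0 < T) :
    ∀ z : EuclideanSpace ℝ (Fin n),
      ∑ k, ((1 / (T : ℝ)) * ∑ t ∈ range T, lam t k) * (f k (w T) - f k z) ≤
        ‖w 0 - z‖ ^ 2 / (2 * η * T) := by
  intro z
  have hLη : η * L ≤ 1 := (le_div_iff₀ hL).mp hη1
  -- per-step bound
  have key : ∀ t, ∑ k, lam t k * (f k (w (t + 1)) - f k z) ≤
      (‖w t - z‖ ^ 2 - ‖w (t + 1) - z‖ ^ 2) / (2 * η) := by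
    intro t
    have hstep' : w (t + 1) - w t = -(η • d t) := by rw [hstep t]; abel
    have hk : ∀ k, f k (w (t + 1)) - f k z ≤
        ⟪gradf k (w t), w t - z⟫ - η * ⟪gradf k (w t), d t⟫ + L / 2 * η ^ 2 * ‖d t‖ ^ 2 := by
      intro k
      have hdes := descent_lemma hL.le (hgrad k) (hlip k) (w t) (w (t + 1))
      rw [hstep'] at hdes
      have e1 : ⟪gradf k (w t), -(η • d t)⟫ = -(η * ⟪gradf k (w t), d t⟫) := by
        rw [inner_neg_right, real_inner_smul_right]
      have e2 : ‖-(η • d t)‖ ^ 2 = η ^ 2 * ‖d t‖ ^ 2 := by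
        rw [norm_neg, norm_smul, mul_pow]
        simp [abs_of_pos hη0]
      rw [e1, e2] at hdes
      have hcv := convex_grad_ineq (hconv k) (hgrad k) (w t) z
      have e3 : ⟪gradf k (w t), z - w t⟫ = -⟪gradf k (w t), w t - z⟫ := by
        rw [← inner_neg_right, neg_sub]
      rw [e3] at hcv
      linarith
    have hid : ∀ u : EuclideanSpace ℝ (Fin n),
        ⟪d t, u⟫ = ∑ k, lam t k * ⟪gradf k (w t), u⟫ := by
      intro u
      rw [hd t, sum_inner]
      exact Finset.sum_congr rfl fun k _ => real_inner_smul_left _ _ _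
    have e1 : ∑ k, lam t k * (⟪gradf k (w t), w t - z⟫ - η * ⟪gradf k (w t), d t⟫
          + L / 2 * η ^ 2 * ‖d t‖ ^ 2)
        = (∑ k, lam t k * ⟪gradf k (w t), w t - z⟫)
          - η * (∑ k, lam t k * ⟪gradf k (w t), d t⟫)
          + (∑ k, lam t k) * (L / 2 * η ^ 2 * ‖d t‖ ^ 2) := by
      rw [Finset.mul_sum, Finset.sum_mul, ← Finset.sum_sub_distrib, ← Finset.sum_add_distrib]
      exact Finset.sum_congr rfl fun k _ => by ring
    have hsum : ∑ k, lam t k * (f k (w (t + 1)) - f k z)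
        ≤ ⟪d t, w t - z⟫ - η * ⟪d t, d t⟫ + L / 2 * η ^ 2 * ‖d t‖ ^ 2 := by
      calc ∑ k, lam t k * (f k (w (t + 1)) - f k z)
          ≤ ∑ k, lam t k * (⟪gradf k (w t), w t - z⟫ - η * ⟪gradf k (w t), d t⟫
              + L / 2 * η ^ 2 * ‖d t‖ ^ 2) :=
            Finset.sum_le_sum fun k _ => mul_le_mul_of_nonneg_left (hk k) (hlam0 t k)
        _ = ⟪d t, w t - z⟫ - η * ⟪d t, d t⟫ + L / 2 * η ^ 2 * ‖d t‖ ^ 2 := by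
            rw [e1, hlam1 t, one_mul, ← hid, ← hid]
    have hdd : ⟪d t, d t⟫ = ‖d t‖ ^ 2 := real_inner_self_eq_norm_sq _
    have hnorm : ‖w (t + 1) - z‖ ^ 2
        = ‖w t - z‖ ^ 2 - 2 * (η * ⟪w t - z, d t⟫) + η ^ 2 * ‖d t‖ ^ 2 := by
      have h1 : w (t + 1) - z = (w t - z) - η • d t := by rw [hstep t]; abel
      rw [h1, norm_sub_sq_real, real_inner_smul_right, norm_smul, mul_pow]
      simp [abs_of_pos hη0]
    have hcomm : ⟪w t - z, d t⟫ = ⟪d t, w t - z⟫ := real_inner_comm _ _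
    have hdnn : (0:ℝ) ≤ ‖d t‖ ^ 2 := sq_nonneg _
    have hL2 : L / 2 * η ^ 2 * ‖d t‖ ^ 2 ≤ η / 2 * ‖d t‖ ^ 2 := by
      have h1 : L / 2 * η ^ 2 ≤ η / 2 := by nlinarith
      exact mul_le_mul_of_nonneg_right h1 hdnn
    have hfin : ⟪d t, w t - z⟫ - η / 2 * ‖d t‖ ^ 2
        = (‖w t - z‖ ^ 2 - ‖w (t + 1) - z‖ ^ 2) / (2 * η) := by
      rw [hnorm, hcomm]
      field_simp
      ring
    calc ∑ k, lam t k * (f k (w (t + 1)) - f k z)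
        ≤ ⟪d t, w t - z⟫ - η * ⟪d t, d t⟫ + L / 2 * η ^ 2 * ‖d t‖ ^ 2 := hsum
      _ ≤ ⟪d t, w t - z⟫ - η / 2 * ‖d t‖ ^ 2 := by rw [hdd]; linarith
      _ = (‖w t - z‖ ^ 2 - ‖w (t + 1) - z‖ ^ 2) / (2 * η) := hfin
  -- telescoping
  have htel : ∑ t ∈ range T, ∑ k, lam t k * (f k (w (t + 1)) - f k z)
      ≤ ‖w 0 - z‖ ^ 2 / (2 * η) := by
    calc ∑ t ∈ range T, ∑ k, lam t k * (f k (w (t + 1)) - f k z)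
        ≤ ∑ t ∈ range T, (‖w t - z‖ ^ 2 - ‖w (t + 1) - z‖ ^ 2) / (2 * η) :=
          Finset.sum_le_sum fun t _ => key t
      _ = (‖w 0 - z‖ ^ 2 - ‖w T - z‖ ^ 2) / (2 * η) := by
          rw [← Finset.sum_div, Finset.sum_range_sub' (fun i => ‖w i - z‖ ^ 2)]
      _ ≤ ‖w 0 - z‖ ^ 2 / (2 * η) := by
          have h2η : (0:ℝ) < 2 * η := by linarith
          gcongr
          exact sub_le_self _ (sq_nonneg _)
  -- monotonicity of f along iterates
  have hWmono : ∀ (k : Fin m) (a b : ℕ), a ≤ b → f k (w b) ≤ f k (w a) := by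
    intro k a b hab
    induction hab with
    | refl => exact le_rfl
    | step h ih => exact le_trans (hmono _ k) ih
  have hTpos : (0:ℝ) < (T:ℝ) := by exact_mod_cast hT
  have hswap : ∑ k, ((1 / (T : ℝ)) * ∑ t ∈ range T, lam t k) * (f k (w T) - f k z)
      = (1 / (T:ℝ)) * ∑ t ∈ range T, ∑ k, lam t k * (f k (w T) - f k z) := by
    calc ∑ k, ((1 / (T:ℝ)) * ∑ t ∈ range T, lam t k) * (f k (w T) - f k z)
        = ∑ k, ∑ t ∈ range T, 1 / (T:ℝ) * (lam t k * (f k (w T) - f k z)) := by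
          refine Finset.sum_congr rfl fun k _ => ?_
          rw [mul_assoc, Finset.sum_mul, Finset.mul_sum]
      _ = ∑ t ∈ range T, ∑ k, 1 / (T:ℝ) * (lam t k * (f k (w T) - f k z)) := Finset.sum_comm
      _ = (1 / (T:ℝ)) * ∑ t ∈ range T, ∑ k, lam t k * (f k (w T) - f k z) := by
          rw [Finset.mul_sum]
          exact Finset.sum_congr rfl fun t _ => (Finset.mul_sum _ _ _).symm
  rw [hswap]
  have hmid : ∑ t ∈ range T, ∑ k, lam t k * (f k (w T) - f k z)
      ≤ ∑ t ∈ range T, ∑ k, lam t k * (f k (w (t + 1)) - f k z) := by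
    apply Finset.sum_le_sum
    intro t ht
    apply Finset.sum_le_sum
    intro k _
    apply mul_le_mul_of_nonneg_left _ (hlam0 t k)
    have hle : f k (w T) ≤ f k (w (t + 1)) :=
      hWmono k (t + 1) T (Nat.succ_le_of_lt (Finset.mem_range.mp ht))
    linarith
  calc (1 / (T:ℝ)) * ∑ t ∈ range T, ∑ k, lam t k * (f k (w T) - f k z)
      ≤ (1 / (T:ℝ)) * ∑ t ∈ range T, ∑ k, lam t k * (f k (w (t + 1)) - f k z) :=
        mul_le_mul_of_nonneg_left hmid (by positivity)
    _ ≤ (1 / (T:ℝ)) * (‖w 0 - z‖ ^ 2 / (2 * η)) :=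
        mul_le_mul_of_nonneg_left htel (by positivity)
    _ = ‖w 0 - z‖ ^ 2 / (2 * η * T) := by
        rw [one_div, inv_mul_eq_div, div_div]
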